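/- Let r ∈ (0, π/2) and α ∈ [0, π/2). Then the function ℓ ↦ g(ℓ, α, α) on [0, ∞) attains its maximum at ℓ₀ = 2·arctan(tan(r)·cos(α)), and this maximizer is unique: g(ℓ, α, α) < g(ℓ₀, α, α) for every ℓ ≥ 0 with ℓ ≠ ℓ₀. -/

import Mathlib

open Real

/-- The candle function of the unit `4`-sphere: `s(ℓ) = sin³ ℓ` on `[0, π]`, `0` afterwards. -/
noncomputable def sphCandle (ℓ : ℝ) : ℝ :=
  if ℓ ≤ π then (sin ℓ) ^ 3 else 0

/-- The primitive of `sphCandle` vanishing at `0`. -/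
noncomputable def sphCandleI (ℓ : ℝ) : ℝ :=
  if ℓ ≤ π then 2 / 3 - (1 / 3) * (sin ℓ) ^ 2 * cos ℓ - (2 / 3) * cos ℓ else 4 / 3

/-- The primitive of `sphCandleI` vanishing at `0`. -/
noncomputable def sphCandleII (ℓ : ℝ) : ℝ :=
  if ℓ ≤ π then (2 / 3) * ℓ - (2 / 3) * sin ℓ - (1 / 9) * (sin ℓ) ^ 3
  else ((2 / 3) * π - (2 / 3) * sin π - (1 / 9) * (sin π) ^ 3) + (4 / 3) * (ℓ - π)

/-- The dual test function for the `κ = +1`, `n = 4` isoperimetric problem. -/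
noncomputable def sphG (r ℓ α β : ℝ) : ℝ :=
  (4 / 3) * ℓ - sphCandle ℓ / (9 * (tan r) ^ 2 * cos α * cos β)
    - (sphCandleI ℓ / (3 * tan r)) * (1 / cos α + 1 / cos β) - sphCandleII ℓ

/-! Auxiliary machinery. -/

/-- `sphG r ℓ α α` on `[0,π]`, rewritten in terms of `c = 1/(tan r cos α)`. -/
noncomputable def sphF (c ℓ : ℝ) : ℝ :=
  (2/3)*(ℓ + sin ℓ) + ((1 - c^2)/9)*(sin ℓ)^3 - 4*c/9 + (2*c/9)*(sin ℓ)^2*cos ℓ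
    + (4*c/9)*cos ℓ

/-- The value of `sphF c` at its critical point `2 arctan (1/c)`. -/
noncomputable def sphM (x : ℝ) : ℝ := (2/3)*π - (4/3)*arctan x + 4*x/(9*(1+x^2))

/-- The derivative of `sphM`. -/
noncomputable def sphMd (x : ℝ) : ℝ := -(8/9)*(1+2*x^2)/(1+x^2)^2

lemma hasDerivAt_sphM (x : ℝ) : HasDerivAt sphM (sphMd x) x := by
  have hx : (9:ℝ)*(1 + x^2) ≠ 0 := by positivity
  have h1 : HasDerivAt (fun y : ℝ => (2/3)*π - (4/3)*arctan y + 4*y/(9*(1+y^2)))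
      (((0:ℝ) - (4/3)*(1/(1+x^2))) +
        ((4*1) * (9*(1+x^2)) - (4*x) * (9*(2*x^1))) / (9*(1+x^2))^2) x := by
    exact ((hasDerivAt_const x ((2:ℝ)/3*π)).sub
      ((Real.hasDerivAt_arctan x).const_mul (4/3))).add
      (((hasDerivAt_id x).const_mul 4).div
        (((hasDerivAt_pow 2 x).const_add 1).const_mul 9) hx)
  have h2 : (((0:ℝ) - (4/3)*(1/(1+x^2))) +
      ((4*1) * (9*(1+x^2)) - (4*x) * (9*(2*x^1))) / (9*(1+x^2))^2) = sphMd x := by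
    have h3 : (1:ℝ) + x^2 ≠ 0 := by positivity
    unfold sphMd
    field_simp
    ring
  rw [h2] at h1
  exact h1

lemma sphMd_lt {a b : ℝ} (hb : 0 ≤ b) (hab : b < a) : sphMd b < sphMd a := by
  unfold sphMd
  rw [div_lt_div_iff₀ (by positivity) (by positivity)]
  have key : b^2 < a^2 := by nlinarith
  nlinarith [mul_pos (sub_pos.mpr key)
    (show (0:ℝ) < a^2 + b^2 + 2*a^2*b^2 + 1 by positivity), sq_nonneg (a*b)]

/-- The strict tangent-line inequality for the strictly convex function `sphM`. -/
lemma sphM_tangent_lt {a b : ℝ} (ha : 0 < a) (hb : 0 < b) (hab : a ≠ b) :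
    sphM b + (a - b) * sphMd b < sphM a := by
  have hd : ∀ x : ℝ, HasDerivAt (fun y => sphM y - (y - b) * sphMd b)
      (sphMd x - sphMd b) x := by
    intro x
    have := (hasDerivAt_sphM x).sub (((hasDerivAt_id x).sub_const b).mul_const (sphMd b))
    simp only [id_eq, one_mul] at this
    exact this
  rcases lt_or_gt_of_ne hab with h1 | h1
  · -- a < b
    have hanti : StrictAntiOn (fun y => sphM y - (y - b) * sphMd b) (Set.Icc a b) := by
      apply strictAntiOn_of_deriv_neg (convex_Icc a b)
      · exact fun x _ => (hd x).continuousAt.continuousWithinAt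
      · intro x hx
        rw [interior_Icc] at hx
        rw [(hd x).deriv]
        exact sub_neg.mpr (sphMd_lt (le_of_lt (lt_trans ha hx.1)) hx.2)
    have := hanti (Set.left_mem_Icc.mpr h1.le) (Set.right_mem_Icc.mpr h1.le) h1
    simp only [sub_self, zero_mul, sub_zero] at this
    linarith
  · -- b < a
    have hmono : StrictMonoOn (fun y => sphM y - (y - b) * sphMd b) (Set.Icc b a) := by
      apply strictMonoOn_of_deriv_pos (convex_Icc b a)
      · exact fun x _ => (hd x).continuousAt.continuousWithinAt
      · intro x hx
        rw [interior_Icc] at hx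
        rw [(hd x).deriv]
        exact sub_pos.mpr (sphMd_lt hb.le hx.1)
    have := hmono (Set.left_mem_Icc.mpr h1.le) (Set.right_mem_Icc.mpr h1.le) h1
    simp only [sub_self, zero_mul, sub_zero] at this
    linarith

/-- The plateau value `2π/3 - 8c/9` is strictly below the maximum value `sphM c`. -/
lemma sphM_pi_lt {c : ℝ} (hc : 0 < c) : (2/3)*π - 8*c/9 < sphM c := by
  have hd : ∀ x : ℝ, HasDerivAt (fun y => sphM y + 8*y/9) (sphMd x + 8/9) x := by
    intro x
    have := (hasDerivAt_sphM x).add (((hasDerivAt_id x).const_mul 8).div_const 9)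
    simp only [id_eq, mul_one] at this
    exact this
  have hmono : StrictMonoOn (fun y => sphM y + 8*y/9) (Set.Icc 0 c) := by
    apply strictMonoOn_of_deriv_pos (convex_Icc 0 c)
    · exact fun x _ => (hd x).continuousAt.continuousWithinAt
    · intro x hx
      rw [interior_Icc] at hx
      rw [(hd x).deriv]
      unfold sphMd
      rw [neg_mul, neg_div, neg_add_eq_sub, sub_pos, div_lt_div_iff₀ (by positivity) (by norm_num)]
      nlinarith [pow_pos hx.1 4]
  have := hmono (Set.left_mem_Icc.mpr hc.le) (Set.right_mem_Icc.mpr hc.le) hc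
  simp only [sphM, arctan_zero] at this ⊢
  norm_num at this
  linarith

lemma sin_two_arctan {v : ℝ} : sin (2 * arctan v) = 2*v/(1+v^2) := by
  have h0 : (0:ℝ) ≤ 1 + v^2 := by positivity
  have hsq : √(1+v^2) * √(1+v^2) = 1+v^2 := Real.mul_self_sqrt h0
  have hne : √(1+v^2) ≠ 0 := by positivity
  rw [sin_two_mul, Real.sin_arctan, Real.cos_arctan]
  field_simp
  rw [Real.sq_sqrt h0]


lemma cos_two_arctan {v : ℝ} : cos (2 * arctan v) = (1-v^2)/(1+v^2) := by
  have h0 : (0:ℝ) ≤ 1 + v^2 := by positivity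
  have h1 : (1:ℝ) + v^2 ≠ 0 := by positivity
  rw [cos_two_mul, Real.cos_arctan, div_pow, one_pow, Real.sq_sqrt h0]
  field_simp
  ring

/-- The key exact identity: `sphF (1/u)` at `ℓ = 2 arctan v` equals the tangent line of
`sphM` at `1/v` evaluated at `1/u`, plus a nonpositive quadratic correction. -/
lemma sphF_eq_tangent {u v : ℝ} (hu : 0 < u) (hv : 0 < v) :
    sphF (1/u) (2*arctan v)
      = sphM (1/v) + (1/u - 1/v) * sphMd (1/v) - (1/u - 1/v)^2 * (2*v/(1+v^2))^3/9 := by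
  have ha : arctan (1/v) = π/2 - arctan v := by
    rw [one_div]; exact Real.arctan_inv_of_pos hv
  have h1 : (1:ℝ) + v^2 ≠ 0 := by positivity
  have hu' : u ≠ 0 := ne_of_gt hu
  have hv' : v ≠ 0 := ne_of_gt hv
  unfold sphF sphM sphMd
  rw [sin_two_arctan, cos_two_arctan, ha]
  field_simp
  ring

lemma sphF_crit {u : ℝ} (hu : 0 < u) : sphF (1/u) (2*arctan u) = sphM (1/u) := by
  rw [sphF_eq_tangent hu hu]
  simp

lemma sphF_pi (c : ℝ) : sphF c π = (2/3)*π - 8*c/9 := by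
  unfold sphF
  rw [Real.sin_pi, Real.cos_pi]
  ring

lemma sphG_eq_sphF {r α ℓ : ℝ} (hl : ℓ ≤ π) (htr : tan r ≠ 0) (hca : cos α ≠ 0) :
    sphG r ℓ α α = sphF (1/(tan r * cos α)) ℓ := by
  unfold sphG sphCandle sphCandleI sphCandleII sphF
  rw [if_pos hl, if_pos hl, if_pos hl]
  field_simp
  ring

lemma sphG_eq_plateau {r α ℓ : ℝ} (hl : π < ℓ) (htr : tan r ≠ 0) (hca : cos α ≠ 0) :
    sphG r ℓ α α = (2/3)*π - 8*(1/(tan r * cos α))/9 := by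
  unfold sphG sphCandle sphCandleI sphCandleII
  rw [if_neg (not_le.mpr hl), if_neg (not_le.mpr hl), if_neg (not_le.mpr hl), Real.sin_pi]
  field_simp
  ring

/-- For fixed `α`, the function `ℓ ↦ g(ℓ, α, α)` on `[0, ∞)` attains its maximum at
`ℓ₀ = 2 arctan (tan r · cos α)` and only there. -/
theorem sphG_lt_of_ne (r α : ℝ) (hr : r ∈ Set.Ioo 0 (π / 2)) (hα : α ∈ Set.Ico 0 (π / 2)) :
    ∀ ℓ : ℝ, 0 ≤ ℓ → ℓ ≠ 2 * arctan (tan r * cos α) →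
      sphG r ℓ α α < sphG r (2 * arctan (tan r * cos α)) α α := by
  intro ℓ hl hne
  have hca : 0 < cos α := Real.cos_pos_of_mem_Ioo ⟨by linarith [hα.1, Real.pi_div_two_pos], hα.2⟩
  have htr : 0 < tan r := Real.tan_pos_of_pos_of_lt_pi_div_two hr.1 hr.2
  set t : ℝ := tan r * cos α with hts
  have ht : 0 < t := mul_pos htr hca
  have hat : 0 < arctan t := by simpa using Real.arctan_strictMono ht
  have hat2 : arctan t < π/2 := Real.arctan_lt_pi_div_two t
  have hl0pi : 2 * arctan t ≤ π := by linarith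
  have hrhs : sphG r (2 * arctan t) α α = sphM (1/t) := by
    rw [sphG_eq_sphF hl0pi (ne_of_gt htr) (ne_of_gt hca), ← hts, sphF_crit ht]
  rw [hrhs]
  rcases lt_or_ge π ℓ with hπ | hπ
  · rw [sphG_eq_plateau hπ (ne_of_gt htr) (ne_of_gt hca), ← hts]
    exact sphM_pi_lt (by positivity)
  · rw [sphG_eq_sphF hπ (ne_of_gt htr) (ne_of_gt hca), ← hts]
    rcases eq_or_lt_of_le hl with h0 | h0
    · -- ℓ = 0
      rw [← h0]
      have hF0 : sphF (1/t) 0 = 0 := by unfold sphF; simp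
      rw [hF0]
      have harc : arctan (1/t) < π/2 := Real.arctan_lt_pi_div_two _
      have hpos : 0 < 4*(1/t)/(9*(1+(1/t)^2)) := by positivity
      unfold sphM
      nlinarith
    · rcases eq_or_lt_of_le hπ with hπ' | hπ'
      · -- ℓ = π
        rw [hπ', sphF_pi]
        exact sphM_pi_lt (by positivity)
      · -- 0 < ℓ < π
        set v : ℝ := tan (ℓ/2) with hvs
        have hv : 0 < v := Real.tan_pos_of_pos_of_lt_pi_div_two (by linarith) (by linarith)
        have harc : 2 * arctan v = ℓ := by
          rw [hvs, Real.arctan_tan (by linarith) (by linarith)]; ring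
        have hvu : v ≠ t := by
          intro h
          exact hne (by rw [← harc, h])
        have hinv : (1:ℝ)/t ≠ 1/v := by
          intro h
          exact hvu (by field_simp at h; linarith)
        have h3 := sphM_tangent_lt (one_div_pos.mpr ht) (one_div_pos.mpr hv) hinv
        have h4 : 0 ≤ (1/t - 1/v)^2 * (2*v/(1+v^2))^3/9 := by positivity
        rw [← harc, sphF_eq_tangent ht hv]
        linarith
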